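/- There exists an office-like polygon all of whose vertices have integer coordinates such that every vertex guard set of it has dispersion distance at most 3. -/

import Mathlib

open Set
open scoped ENNReal

noncomputable section

/-- The plane, equipped with the `L¹` metric. -/
abbrev Plane : Type := WithLp 1 (ℝ × ℝ)

namespace DispersiveAGP

noncomputable instance : DecidableEq Plane := Classical.decEq _

/-- The `x`-coordinate of a point of the plane. -/
def px (p : Plane) : ℝ := (WithLp.equiv 1 (ℝ × ℝ) p).1

/-- The `y`-coordinate of a point of the plane. -/
def py (p : Plane) : ℝ := (WithLp.equiv 1 (ℝ × ℝ) p).2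

/-- The point of the plane with the given coordinates. -/
def pt (a b : ℝ) : Plane := (WithLp.equiv 1 (ℝ × ℝ)).symm (a, b)

/-- Data of an axis-parallel rectangle. -/
structure Rect where
  x1 : ℝ
  x2 : ℝ
  y1 : ℝ
  y2 : ℝ

noncomputable instance : DecidableEq Rect := Classical.decEq _

/-- The closed rectangle, as a set of points of the plane. -/
def Rect.toSet (R : Rect) : Set Plane :=
  {p | R.x1 ≤ px p ∧ px p ≤ R.x2 ∧ R.y1 ≤ py p ∧ py p ≤ R.y2}

/-- The open rectangle. -/
def Rect.interiorSet (R : Rect) : Set Plane :=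
  {p | R.x1 < px p ∧ px p < R.x2 ∧ R.y1 < py p ∧ py p < R.y2}

/-- The rectangle is nondegenerate. -/
def Rect.Nondegenerate (R : Rect) : Prop := R.x1 < R.x2 ∧ R.y1 < R.y2

/-- `p` and `q` r-see each other within the region `S`: the closed axis-parallel
rectangle with opposite corners `p` and `q` is contained in `S`. -/
def RSee (S : Set Plane) (p q : Plane) : Prop :=
  {r : Plane | min (px p) (px q) ≤ px r ∧ px r ≤ max (px p) (px q) ∧
      min (py p) (py q) ≤ py r ∧ py r ≤ max (py p) (py q)} ⊆ S

/-- A vertex of (the boundary of) the region `S`: a boundary point such that in no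
neighborhood of it is the boundary contained in a single line. -/
def IsVertex (S : Set Plane) (v : Plane) : Prop :=
  v ∈ frontier S ∧
    ∀ ε > (0 : ℝ), ¬ ∃ a b c : ℝ, (a ≠ 0 ∨ b ≠ 0) ∧
      ∀ q ∈ frontier S ∩ Metric.ball v ε, a * px q + b * py q = c

/-- A vertex guard set of the region `S`, under r-visibility. -/
def IsGuardSet (S : Set Plane) (G : Finset Plane) : Prop :=
  (∀ g ∈ G, IsVertex S g) ∧ ∀ p ∈ S, ∃ g ∈ G, RSee S g p

/-- Geodesic `L¹`-distance within `S`: the infimum of `L¹`-lengths (total variations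
with respect to the `L¹` metric) of paths from `p` to `q` that stay inside `S`. -/
def geodesic (S : Set Plane) (p q : Plane) : ℝ≥0∞ :=
  ⨅ (γ : Path p q) (_ : Set.range (fun t => γ t) ⊆ S),
    eVariationOn (fun t => γ t) Set.univ

/-- The dispersion distance of a guard set `G` within region `S`: the minimum geodesic
`L¹`-distance between two distinct guards. -/
def dispersion (S : Set Plane) (G : Finset Plane) : ℝ≥0∞ :=
  ⨅ (g ∈ G) (g' ∈ G) (_ : g ≠ g'), geodesic S g g'

/-- The guard set `G` has dispersion distance at least `ℓ`. -/
def DispersionAtLeast (S : Set Plane) (G : Finset Plane) (ℓ : ℝ≥0∞) : Prop :=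
  ∀ g ∈ G, ∀ g' ∈ G, g ≠ g' → ℓ ≤ geodesic S g g'

/-- `G` is a vertex guard set attaining the maximum possible dispersion distance. -/
def AttainsMaxDispersion (S : Set Plane) (G : Finset Plane) : Prop :=
  IsGuardSet S G ∧ ∀ G' : Finset Plane, IsGuardSet S G' → dispersion S G' ≤ dispersion S G

/-- The horizontal corridor `C` connects the room `R1` (on its left) with the room `R2`
(on its right): the two vertical sides of `C` are strictly contained in the relative
interiors of the corresponding vertical edges of `R1` resp. `R2`. -/
def ConnectsH (C R1 R2 : Rect) : Prop :=
  R1.x2 = C.x1 ∧ C.x2 = R2.x1 ∧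
  R1.y1 < C.y1 ∧ C.y2 < R1.y2 ∧ R2.y1 < C.y1 ∧ C.y2 < R2.y2

/-- The vertical corridor `C` connects the room `R1` (below) with the room `R2` (above). -/
def ConnectsV (C R1 R2 : Rect) : Prop :=
  R1.y2 = C.y1 ∧ C.y2 = R2.y1 ∧
  R1.x1 < C.x1 ∧ C.x2 < R1.x2 ∧ R2.x1 < C.x1 ∧ C.x2 < R2.x2

/-- The corridor `C` connects the rooms `R1` and `R2`. -/
def Connects (C R1 R2 : Rect) : Prop := ConnectsH C R1 R2 ∨ ConnectsV C R1 R2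

/-- An office-like polygon: a connected union of rectangular rooms linked by
rectangular corridors, each corridor connecting exactly two rooms and being strictly
narrower than both of them. -/
structure OfficePolygon where
  rooms : Finset Rect
  corridors : Finset Rect
  rooms_nonempty : rooms.Nonempty
  nondeg_rooms : ∀ R ∈ rooms, R.Nondegenerate
  nondeg_corridors : ∀ C ∈ corridors, C.Nondegenerate
  connects : ∀ C ∈ corridors, ∃ R1 ∈ rooms, ∃ R2 ∈ rooms, R1 ≠ R2 ∧ Connects C R1 R2
  corridor_room_disjoint : ∀ C ∈ corridors, ∀ R ∈ rooms, C.interiorSet ∩ R.toSet = ∅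
  rooms_disjoint : ∀ R1 ∈ rooms, ∀ R2 ∈ rooms, R1 ≠ R2 → R1.interiorSet ∩ R2.interiorSet = ∅
  corridors_disjoint : ∀ C1 ∈ corridors, ∀ C2 ∈ corridors, C1 ≠ C2 →
    C1.interiorSet ∩ C2.interiorSet = ∅
  connected : IsConnected ((⋃ R ∈ rooms, R.toSet) ∪ (⋃ C ∈ corridors, C.toSet))

/-- The polygonal region covered by an office-like polygon. -/
def OfficePolygon.region (P : OfficePolygon) : Set Plane :=
  (⋃ R ∈ P.rooms, R.toSet) ∪ (⋃ C ∈ P.corridors, C.toSet)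

/-- All vertices of the region lie on integer coordinates. -/
def HasIntegerVertices (S : Set Plane) : Prop :=
  ∀ v, IsVertex S v → ∃ a b : ℤ, v = pt a b

/-- Any two distinct vertices are at geodesic `L¹`-distance at least `1`. -/
def VertexSeparated (S : Set Plane) : Prop :=
  ∀ v w, IsVertex S v → IsVertex S w → v ≠ w → 1 ≤ geodesic S v w

/-- The corridors `C1` and `C2` are independent within `S`: no guard placed at a vertex
of one of them r-sees all of the other. -/
def IndependentCorridors (S : Set Plane) (C1 C2 : Rect) : Prop :=
  (∀ v, IsVertex S v → v ∈ C1.toSet → ∃ q ∈ C2.toSet, ¬ RSee S v q) ∧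
  (∀ v, IsVertex S v → v ∈ C2.toSet → ∃ q ∈ C1.toSet, ¬ RSee S v q)

/-- An office-like polygon is independent if all pairs of distinct corridors are
independent. -/
def OfficePolygon.Independent (P : OfficePolygon) : Prop :=
  ∀ C1 ∈ P.corridors, ∀ C2 ∈ P.corridors, C1 ≠ C2 → IndependentCorridors P.region C1 C2


/-! ### Auxiliary lemmas -/

@[simp] lemma px_pt (a b : ℝ) : px (pt a b) = a := rfl
@[simp] lemma py_pt (a b : ℝ) : py (pt a b) = b := rfl
@[simp] lemma pt_px_py (p : Plane) : pt (px p) (py p) = p := rfl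

lemma pt_inj {a b a' b' : ℝ} (h : pt a b = pt a' b') : a = a' ∧ b = b' :=
  ⟨by simpa using congrArg px h, by simpa using congrArg py h⟩

lemma dist_eq' (p q : Plane) : dist p q = |px p - px q| + |py p - py q| := by
  have h := WithLp.prod_dist_eq_add (p := 1) (by norm_num) p q
  simpa [Real.dist_eq, px, py] using h

lemma continuous_px : Continuous px :=
  continuous_fst.comp (WithLp.prod_continuous_ofLp 1 ℝ ℝ)
lemma continuous_py : Continuous py :=
  continuous_snd.comp (WithLp.prod_continuous_ofLp 1 ℝ ℝ)

lemma univ_eq_Icc : (univ : Set unitInterval) = Icc 0 1 := by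
  ext ⟨t, ht⟩
  simp only [mem_univ, true_iff, mem_Icc, ← Subtype.coe_le_coe]
  exact ht

lemma eVariationOn_val :
    eVariationOn (fun t : unitInterval => (t : ℝ)) univ ≤ ENNReal.ofReal 1 := by
  have hm : MonotoneOn (fun t : unitInterval => (t : ℝ)) univ := by
    intro x _ y _ hxy; exact Subtype.coe_le_coe.mpr hxy
  have h := hm.eVariationOn_le (mem_univ (0 : unitInterval)) (mem_univ 1)
  rw [univ_eq_Icc]
  simpa using h

set_option maxHeartbeats 1000000 in
/-- A vertical-then-horizontal rectilinear path bounds the geodesic distance. -/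
lemma geodesic_le_vh (S : Set Plane) (a b a' c : ℝ)
    (hV : ∀ y : ℝ, min b c ≤ y → y ≤ max b c → pt a y ∈ S)
    (hH : ∀ x : ℝ, min a a' ≤ x → x ≤ max a a' → pt x c ∈ S) :
    geodesic S (pt a b) (pt a' c) ≤ ENNReal.ofReal (|c - b| + |a' - a|) := by
  set L1 := |c - b| with hL1def
  set L2 := |a' - a| with hL2def
  set d := L1 + L2 with hddef
  have hL1 : 0 ≤ L1 := abs_nonneg _
  have hL2 : 0 ≤ L2 := abs_nonneg _
  have hd : 0 ≤ d := by positivity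
  set s1 : ℝ := if b ≤ c then 1 else -1 with hs1def
  set s2 : ℝ := if a ≤ a' then 1 else -1 with hs2def
  have habs1 : |s1| = 1 := by rw [hs1def]; split <;> norm_num
  have habs2 : |s2| = 1 := by rw [hs2def]; split <;> norm_num
  set f : ℝ → ℝ := fun t => min (t * d) L1 with hfdef
  set g : ℝ → ℝ := fun t => max (t * d - L1) 0 with hgdef
  have hfg : ∀ t, f t + g t = t * d := by
    intro t
    rcases le_total (t * d) L1 with h | h
    · simp [hfdef, hgdef, min_eq_left h, max_eq_right (by linarith : t * d - L1 ≤ 0)]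
    · rw [hfdef, hgdef]
      simp only
      rw [min_eq_right h, max_eq_left (by linarith : (0:ℝ) ≤ t * d - L1)]
      ring
  have hfmono : Monotone f :=
    fun t u htu => min_le_min (mul_le_mul_of_nonneg_right htu hd) le_rfl
  have hgmono : Monotone g :=
    fun t u htu => max_le_max (by linarith [mul_le_mul_of_nonneg_right htu hd]) le_rfl
  set γ0 : ℝ → Plane := fun t => pt (a + s2 * g t) (b + s1 * f t) with hγ0def
  have hdist : ∀ t u : ℝ, dist (γ0 t) (γ0 u) ≤ d * dist t u := by
    have key : ∀ t u : ℝ, t ≤ u → dist (γ0 t) (γ0 u) ≤ d * dist t u := by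
      intro t u htu
      rw [dist_eq', hγ0def]
      simp only [px_pt, py_pt]
      have e1 : a + s2 * g t - (a + s2 * g u) = s2 * (g t - g u) := by ring
      have e2 : b + s1 * f t - (b + s1 * f u) = s1 * (f t - f u) := by ring
      rw [e1, e2, abs_mul, abs_mul, habs1, habs2, one_mul, one_mul]
      have h1 : |g t - g u| = g u - g t := by
        rw [abs_sub_comm]; exact abs_of_nonneg (by linarith [hgmono htu])
      have h2 : |f t - f u| = f u - f t := by
        rw [abs_sub_comm]; exact abs_of_nonneg (by linarith [hfmono htu])
      rw [h1, h2, Real.dist_eq, abs_of_nonpos (by linarith : t - u ≤ 0)]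
      have ht := hfg t
      have hu := hfg u
      nlinarith
    intro t u
    rcases le_total t u with h | h
    · exact key t u h
    · rw [dist_comm, dist_comm t u]; exact key u t h
  have hlip : LipschitzWith d.toNNReal γ0 := by
    apply LipschitzWith.of_dist_le_mul
    intro t u
    rw [Real.coe_toNNReal d hd]
    exact hdist t u
  have hf0 : f 0 = 0 := by
    rw [hfdef]; simp only [zero_mul]; exact min_eq_left hL1
  have hg0 : g 0 = 0 := by
    rw [hgdef]; simp only [zero_mul, zero_sub]; exact max_eq_right (by linarith)
  have hf1 : f 1 = L1 := by
    rw [hfdef]; simp only [one_mul]; exact min_eq_right (by linarith)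
  have hg1 : g 1 = L2 := by
    rw [hgdef]; simp only [one_mul]
    rw [max_eq_left (by linarith)]; rw [hddef]; ring
  have hy1 : b + s1 * L1 = c := by
    rw [hs1def, hL1def]
    rcases le_or_gt b c with h | h
    · rw [if_pos h, abs_of_nonneg (by linarith)]; ring
    · rw [if_neg (not_le.mpr h), abs_of_nonpos (by linarith)]; ring
  have hx1 : a + s2 * L2 = a' := by
    rw [hs2def, hL2def]
    rcases le_or_gt a a' with h | h
    · rw [if_pos h, abs_of_nonneg (by linarith)]; ring
    · rw [if_neg (not_le.mpr h), abs_of_nonpos (by linarith)]; ring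
  have hsrc : γ0 0 = pt a b := by
    rw [hγ0def]; simp only [hf0, hg0, mul_zero, add_zero]
  have htgt : γ0 1 = pt a' c := by
    rw [hγ0def]; simp only [hf1, hg1, hy1, hx1]
  let γ : Path (pt a b) (pt a' c) :=
    { toFun := fun t => γ0 t
      continuous_toFun := hlip.continuous.comp continuous_subtype_val
      source' := by
        show γ0 ((0 : unitInterval) : ℝ) = pt a b
        have h0 : ((0 : unitInterval) : ℝ) = 0 := rfl
        rw [h0, hsrc]
      target' := by
        show γ0 ((1 : unitInterval) : ℝ) = pt a' c
        have h1 : ((1 : unitInterval) : ℝ) = 1 := rfl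
        rw [h1, htgt] }
  have hmem : ∀ t : unitInterval, γ0 (t : ℝ) ∈ S := by
    intro t
    have ht0 : (0:ℝ) ≤ t := t.2.1
    have ht1 : (t:ℝ) ≤ 1 := t.2.2
    have htd0 : 0 ≤ (t : ℝ) * d := mul_nonneg ht0 hd
    have htd1 : (t : ℝ) * d ≤ d := by nlinarith
    have hfnn : 0 ≤ f t := le_min htd0 hL1
    have hfle : f t ≤ L1 := min_le_right _ _
    have hgnn : 0 ≤ g t := le_max_right _ _
    have hgle : g t ≤ L2 := by
      rw [hgdef]; simp only
      apply max_le _ hL2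
      linarith
    rcases le_or_gt ((t : ℝ) * d) L1 with h | h
    · have hgt : g (t : ℝ) = 0 := by
        rw [hgdef]; simp only; exact max_eq_right (by linarith)
      rw [hγ0def]; simp only [hgt, mul_zero, add_zero]
      apply hV
      · rcases le_or_gt b c with hbc | hbc
        · rw [hs1def, if_pos hbc, min_eq_left hbc]; linarith
        · rw [hs1def, if_neg (not_le.mpr hbc), min_eq_right hbc.le]
          have : L1 = b - c := by rw [hL1def, abs_of_nonpos (by linarith)]; ring
          linarith
      · rcases le_or_gt b c with hbc | hbc
        · rw [hs1def, if_pos hbc, max_eq_right hbc]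
          have : L1 = c - b := by rw [hL1def, abs_of_nonneg (by linarith)]
          linarith
        · rw [hs1def, if_neg (not_le.mpr hbc), max_eq_left hbc.le]; linarith
    · have hft : f (t : ℝ) = L1 := by
        rw [hfdef]; simp only; exact min_eq_right h.le
      rw [hγ0def]; simp only [hft, hy1]
      apply hH
      · rcases le_or_gt a a' with haa | haa
        · rw [hs2def, if_pos haa, min_eq_left haa]; linarith
        · rw [hs2def, if_neg (not_le.mpr haa), min_eq_right haa.le]
          have : L2 = a - a' := by rw [hL2def, abs_of_nonpos (by linarith)]; ring
          linarith
      · rcases le_or_gt a a' with haa | haa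
        · rw [hs2def, if_pos haa, max_eq_right haa]
          have : L2 = a' - a := by rw [hL2def, abs_of_nonneg (by linarith)]
          linarith
        · rw [hs2def, if_neg (not_le.mpr haa), max_eq_left haa.le]; linarith
  have hrange : range (fun t : unitInterval => γ t) ⊆ S := by
    rintro _ ⟨t, rfl⟩; exact hmem t
  have step1 : geodesic S (pt a b) (pt a' c) ≤ eVariationOn (fun t : unitInterval => γ t) univ := by
    exact iInf_le_of_le γ (iInf_le_of_le hrange le_rfl)
  refine step1.trans ?_
  have comp : eVariationOn (fun t : unitInterval => γ t) univ
      = eVariationOn (γ0 ∘ fun t : unitInterval => (t : ℝ)) univ := rfl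
  rw [comp]
  have hlipOn : LipschitzOnWith d.toNNReal γ0 univ := hlip.lipschitzOnWith
  have := hlipOn.comp_eVariationOn_le (mapsTo_univ (fun t : unitInterval => (t : ℝ)) univ)
  refine this.trans ?_
  calc (d.toNNReal : ℝ≥0∞) * eVariationOn (fun t : unitInterval => (t : ℝ)) univ
      ≤ (d.toNNReal : ℝ≥0∞) * ENNReal.ofReal 1 := by
        gcongr; exact eVariationOn_val
    _ = ENNReal.ofReal d := by
        rw [ENNReal.ofReal_one, mul_one]; rfl

/-! ### The concrete polygon -/

def R1 : Rect := ⟨0, 2, 0, 7⟩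
def R2 : Rect := ⟨3, 5, 0, 7⟩
def C1 : Rect := ⟨2, 3, 1, 2⟩
def C2 : Rect := ⟨2, 3, 3, 4⟩
def C3 : Rect := ⟨2, 3, 5, 6⟩

/-- The region, explicitly. -/
def SS : Set Plane :=
  R1.toSet ∪ R2.toSet ∪ (C1.toSet ∪ (C2.toSet ∪ C3.toSet))

lemma mem_SS {p : Plane} : p ∈ SS ↔
    (0 ≤ px p ∧ px p ≤ 2 ∧ 0 ≤ py p ∧ py p ≤ 7) ∨
    (3 ≤ px p ∧ px p ≤ 5 ∧ 0 ≤ py p ∧ py p ≤ 7) ∨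
    (2 ≤ px p ∧ px p ≤ 3 ∧ 1 ≤ py p ∧ py p ≤ 2) ∨
    (2 ≤ px p ∧ px p ≤ 3 ∧ 3 ≤ py p ∧ py p ≤ 4) ∨
    (2 ≤ px p ∧ px p ≤ 3 ∧ 5 ≤ py p ∧ py p ≤ 6) := by
  show (_ ∨ _) ∨ (_ ∨ (_ ∨ _)) ↔ _
  rw [or_assoc]
  rfl

lemma rect_toSet_closed (R : Rect) : IsClosed R.toSet := by
  have : R.toSet = px ⁻¹' (Icc R.x1 R.x2) ∩ py ⁻¹' (Icc R.y1 R.y2) := by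
    ext p; simp [Rect.toSet, mem_Icc]; tauto
  rw [this]
  exact ((isClosed_Icc.preimage continuous_px).inter (isClosed_Icc.preimage continuous_py))

lemma SS_closed : IsClosed SS :=
  (((rect_toSet_closed R1).union (rect_toSet_closed R2)).union
    ((rect_toSet_closed C1).union ((rect_toSet_closed C2).union (rect_toSet_closed C3))))

lemma rect_interior_open (R : Rect) : IsOpen R.interiorSet := by
  have : R.interiorSet = px ⁻¹' (Ioo R.x1 R.x2) ∩ py ⁻¹' (Ioo R.y1 R.y2) := by
    ext p; simp [Rect.interiorSet, mem_Ioo]; tauto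
  rw [this]
  exact ((isOpen_Ioo.preimage continuous_px).inter (isOpen_Ioo.preimage continuous_py))

lemma rect_convex (R : Rect) : Convex ℝ R.toSet := by
  intro p hp q hq a b ha hb hab
  obtain ⟨h1, h2, h3, h4⟩ := hp
  obtain ⟨h5, h6, h7, h8⟩ := hq
  have hx : px (a • p + b • q) = a * px p + b * px q := rfl
  have hy : py (a • p + b • q) = a * py p + b * py q := rfl
  have hxI := (convex_Icc R.x1 R.x2) (mem_Icc.mpr ⟨h1, h2⟩) (mem_Icc.mpr ⟨h5, h6⟩) ha hb hab
  have hyI := (convex_Icc R.y1 R.y2) (mem_Icc.mpr ⟨h3, h4⟩) (mem_Icc.mpr ⟨h7, h8⟩) ha hb hab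
  rw [smul_eq_mul, smul_eq_mul, mem_Icc] at hxI hyI
  exact ⟨by rw [hx]; exact hxI.1, by rw [hx]; exact hxI.2,
    by rw [hy]; exact hyI.1, by rw [hy]; exact hyI.2⟩

lemma rect_isConnected (R : Rect) (h1 : R.x1 ≤ R.x2) (h2 : R.y1 ≤ R.y2) :
    IsConnected R.toSet := by
  refine ⟨⟨pt R.x1 R.y1, ?_⟩, (rect_convex R).isPreconnected⟩
  exact ⟨le_rfl, by simpa using h1, le_rfl, by simpa using h2⟩

lemma SS_connected : IsConnected SS := by
  have hR1 : IsConnected R1.toSet := rect_isConnected R1 (by norm_num [R1]) (by norm_num [R1])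
  have hR2 : IsConnected R2.toSet := rect_isConnected R2 (by norm_num [R2]) (by norm_num [R2])
  have hC1 : IsConnected C1.toSet := rect_isConnected C1 (by norm_num [C1]) (by norm_num [C1])
  have hC2 : IsConnected C2.toSet := rect_isConnected C2 (by norm_num [C2]) (by norm_num [C2])
  have hC3 : IsConnected C3.toSet := rect_isConnected C3 (by norm_num [C3]) (by norm_num [C3])
  have m1 : pt 2 1 ∈ R1.toSet ∩ C1.toSet := by
    constructor <;> simp only [Rect.toSet, R1, C1, mem_setOf_eq, px_pt, py_pt] <;> norm_num
  have m2 : pt 3 1 ∈ ((R1.toSet ∪ C1.toSet) ∩ R2.toSet) := by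
    constructor
    · right; simp only [Rect.toSet, C1, mem_setOf_eq, px_pt, py_pt]; norm_num
    · simp only [Rect.toSet, R2, mem_setOf_eq, px_pt, py_pt]; norm_num
  have m3 : pt 2 3 ∈ ((R1.toSet ∪ C1.toSet ∪ R2.toSet) ∩ C2.toSet) := by
    constructor
    · left; left; simp only [Rect.toSet, R1, mem_setOf_eq, px_pt, py_pt]; norm_num
    · simp only [Rect.toSet, C2, mem_setOf_eq, px_pt, py_pt]; norm_num
  have m4 : pt 2 5 ∈ ((R1.toSet ∪ C1.toSet ∪ R2.toSet ∪ C2.toSet) ∩ C3.toSet) := by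
    constructor
    · left; left; left; simp only [Rect.toSet, R1, mem_setOf_eq, px_pt, py_pt]; norm_num
    · simp only [Rect.toSet, C3, mem_setOf_eq, px_pt, py_pt]; norm_num
  have h1 : IsConnected (R1.toSet ∪ C1.toSet) := IsConnected.union ⟨_, m1⟩ hR1 hC1
  have h2 : IsConnected (R1.toSet ∪ C1.toSet ∪ R2.toSet) := IsConnected.union ⟨_, m2⟩ h1 hR2
  have h3 : IsConnected (R1.toSet ∪ C1.toSet ∪ R2.toSet ∪ C2.toSet) :=
    IsConnected.union ⟨_, m3⟩ h2 hC2
  have h4 : IsConnected (R1.toSet ∪ C1.toSet ∪ R2.toSet ∪ C2.toSet ∪ C3.toSet) :=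
    IsConnected.union ⟨_, m4⟩ h3 hC3
  have : SS = R1.toSet ∪ C1.toSet ∪ R2.toSet ∪ C2.toSet ∪ C3.toSet := by
    ext p; simp only [SS, mem_union]; tauto
  rw [this]
  exact h4

lemma R1_ne_R2 : R1 ≠ R2 := by simp [R1, R2]
lemma C1_ne_C2 : C1 ≠ C2 := by simp [C1, C2]
lemma C1_ne_C3 : C1 ≠ C3 := by simp [C1, C3]
lemma C2_ne_C3 : C2 ≠ C3 := by simp [C2, C3]

def P : OfficePolygon where
  rooms := {R1, R2}
  corridors := {C1, C2, C3}
  rooms_nonempty := ⟨R1, Finset.mem_insert_self _ _⟩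
  nondeg_rooms := by
    intro R hR
    simp only [Finset.mem_insert, Finset.mem_singleton] at hR
    rcases hR with rfl | rfl <;> constructor <;> norm_num [R1, R2]
  nondeg_corridors := by
    intro C hC
    simp only [Finset.mem_insert, Finset.mem_singleton] at hC
    rcases hC with rfl | rfl | rfl <;> constructor <;> norm_num [C1, C2, C3]
  connects := by
    intro C hC
    simp only [Finset.mem_insert, Finset.mem_singleton] at hC
    refine ⟨R1, Finset.mem_insert_self _ _, R2, ?_, R1_ne_R2, Or.inl ?_⟩
    · simp [Finset.mem_insert]
    · rcases hC with rfl | rfl | rfl <;>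
        exact ⟨by norm_num [R1, C1, C2, C3], by norm_num [R2, C1, C2, C3],
          by norm_num [R1, C1, C2, C3], by norm_num [R1, C1, C2, C3],
          by norm_num [R2, C1, C2, C3], by norm_num [R2, C1, C2, C3]⟩
  corridor_room_disjoint := by
    intro C hC R hR
    simp only [Finset.mem_insert, Finset.mem_singleton] at hC hR
    apply eq_empty_iff_forall_notMem.mpr
    rintro p ⟨hp1, hp2⟩
    obtain ⟨a1, a2, a3, a4⟩ := hp1
    obtain ⟨b1, b2, b3, b4⟩ := hp2
    rcases hC with rfl | rfl | rfl <;> rcases hR with rfl | rfl <;>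
      simp only [C1, C2, C3, R1, R2] at a1 a2 a3 a4 b1 b2 b3 b4 <;> linarith
  rooms_disjoint := by
    intro Ra hRa Rb hRb hne
    simp only [Finset.mem_insert, Finset.mem_singleton] at hRa hRb
    apply eq_empty_iff_forall_notMem.mpr
    rintro p ⟨hp1, hp2⟩
    obtain ⟨a1, a2, a3, a4⟩ := hp1
    obtain ⟨b1, b2, b3, b4⟩ := hp2
    rcases hRa with rfl | rfl <;> rcases hRb with rfl | rfl
    · exact hne rfl
    · simp only [R1, R2] at a1 a2 a3 a4 b1 b2 b3 b4; linarith
    · simp only [R1, R2] at a1 a2 a3 a4 b1 b2 b3 b4; linarith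
    · exact hne rfl
  corridors_disjoint := by
    intro Ca hCa Cb hCb hne
    simp only [Finset.mem_insert, Finset.mem_singleton] at hCa hCb
    apply eq_empty_iff_forall_notMem.mpr
    rintro p ⟨hp1, hp2⟩
    obtain ⟨a1, a2, a3, a4⟩ := hp1
    obtain ⟨b1, b2, b3, b4⟩ := hp2
    rcases hCa with rfl | rfl | rfl <;> rcases hCb with rfl | rfl | rfl <;>
      first
        | exact hne rfl
        | (simp only [C1, C2, C3] at a1 a2 a3 a4 b1 b2 b3 b4; linarith)
  connected := by
    have : ((⋃ R ∈ ({R1, R2} : Finset Rect), R.toSet) ∪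
        (⋃ C ∈ ({C1, C2, C3} : Finset Rect), C.toSet)) = SS := by
      simp only [Finset.set_biUnion_insert, Finset.set_biUnion_singleton]
      rfl
    rw [this]
    exact SS_connected

lemma P_region : P.region = SS := by
  show ((⋃ R ∈ ({R1, R2} : Finset Rect), R.toSet) ∪
      (⋃ C ∈ ({C1, C2, C3} : Finset Rect), C.toSet)) = SS
  simp only [Finset.set_biUnion_insert, Finset.set_biUnion_singleton]
  rfl

/-! ### Frontier and vertex analysis -/

lemma frontier_SS_sub : frontier SS ⊆ SS := SS_closed.frontier_subset

lemma frontier_not_interior {v : Plane} (h : v ∈ frontier SS) : v ∉ interior SS :=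
  fun hi => h.2 hi

lemma interiorSet_sub_toSet (R : Rect) : R.interiorSet ⊆ R.toSet :=
  fun p hp => ⟨hp.1.le, hp.2.1.le, hp.2.2.1.le, hp.2.2.2.le⟩

lemma R1_sub_SS : R1.toSet ⊆ SS := fun p hp => Or.inl (Or.inl hp)
lemma R2_sub_SS : R2.toSet ⊆ SS := fun p hp => Or.inl (Or.inr hp)
lemma C1_sub_SS : C1.toSet ⊆ SS := fun p hp => Or.inr (Or.inl hp)
lemma C2_sub_SS : C2.toSet ⊆ SS := fun p hp => Or.inr (Or.inr (Or.inl hp))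
lemma C3_sub_SS : C3.toSet ⊆ SS := fun p hp => Or.inr (Or.inr (Or.inr hp))

lemma int_sub_interior {R : Rect} (h : R.toSet ⊆ SS) : R.interiorSet ⊆ interior SS :=
  interior_maximal ((interiorSet_sub_toSet R).trans h) (rect_interior_open R)

/-- Any frontier point lies on the grid. -/
lemma frontier_grid {v : Plane} (h : v ∈ frontier SS) :
    (px v = 0 ∨ px v = 2 ∨ px v = 3 ∨ px v = 5) ∨
    (py v = 0 ∨ py v = 1 ∨ py v = 2 ∨ py v = 3 ∨ py v = 4 ∨
     py v = 5 ∨ py v = 6 ∨ py v = 7) := by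
  by_contra hc
  push_neg at hc
  obtain ⟨⟨hx0, hx2, hx3, hx5⟩, hy0, hy1, hy2, hy3, hy4, hy5, hy6, hy7⟩ := hc
  have hv : v ∈ SS := frontier_SS_sub h
  apply frontier_not_interior h
  rcases mem_SS.mp hv with ⟨a1,a2,a3,a4⟩ | ⟨a1,a2,a3,a4⟩ | ⟨a1,a2,a3,a4⟩ |
    ⟨a1,a2,a3,a4⟩ | ⟨a1,a2,a3,a4⟩
  · exact int_sub_interior R1_sub_SS
      ⟨lt_of_le_of_ne a1 (Ne.symm hx0), lt_of_le_of_ne a2 hx2,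
       lt_of_le_of_ne a3 (Ne.symm hy0), lt_of_le_of_ne a4 hy7⟩
  · exact int_sub_interior R2_sub_SS
      ⟨lt_of_le_of_ne a1 (Ne.symm hx3), lt_of_le_of_ne a2 hx5,
       lt_of_le_of_ne a3 (Ne.symm hy0), lt_of_le_of_ne a4 hy7⟩
  · exact int_sub_interior C1_sub_SS
      ⟨lt_of_le_of_ne a1 (Ne.symm hx2), lt_of_le_of_ne a2 hx3,
       lt_of_le_of_ne a3 (Ne.symm hy1), lt_of_le_of_ne a4 hy2⟩
  · exact int_sub_interior C2_sub_SS
      ⟨lt_of_le_of_ne a1 (Ne.symm hx2), lt_of_le_of_ne a2 hx3,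
       lt_of_le_of_ne a3 (Ne.symm hy3), lt_of_le_of_ne a4 hy4⟩
  · exact int_sub_interior C3_sub_SS
      ⟨lt_of_le_of_ne a1 (Ne.symm hx2), lt_of_le_of_ne a2 hx3,
       lt_of_le_of_ne a3 (Ne.symm hy5), lt_of_le_of_ne a4 hy6⟩

lemma X_close {x y : ℝ} (hx : x = 0 ∨ x = 2 ∨ x = 3 ∨ x = 5)
    (hy : y = 0 ∨ y = 2 ∨ y = 3 ∨ y = 5) (h : |x - y| < 1) : x = y := by
  rw [abs_sub_lt_iff] at h
  rcases hx with rfl | rfl | rfl | rfl <;> rcases hy with rfl | rfl | rfl | rfl <;>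
    first
      | rfl
      | (exfalso; linarith [h.1, h.2])

lemma Y_close {x y : ℝ}
    (hx : x = 0 ∨ x = 1 ∨ x = 2 ∨ x = 3 ∨ x = 4 ∨ x = 5 ∨ x = 6 ∨ x = 7)
    (hy : y = 0 ∨ y = 1 ∨ y = 2 ∨ y = 3 ∨ y = 4 ∨ y = 5 ∨ y = 6 ∨ y = 7)
    (h : |x - y| < 1) : x = y := by
  rw [abs_sub_lt_iff] at h
  rcases hx with rfl | rfl | rfl | rfl | rfl | rfl | rfl | rfl <;>
    rcases hy with rfl | rfl | rfl | rfl | rfl | rfl | rfl | rfl <;>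
    first
      | rfl
      | (exfalso; linarith [h.1, h.2])

lemma coord_dist_x {q v : Plane} : |px q - px v| ≤ dist q v := by
  rw [dist_eq']
  have := abs_nonneg (py q - py v)
  linarith

lemma coord_dist_y {q v : Plane} : |py q - py v| ≤ dist q v := by
  rw [dist_eq']
  have := abs_nonneg (px q - px v)
  linarith

/-- Every vertex of `SS` lies on a grid intersection. -/
lemma vertex_grid {v : Plane} (h : IsVertex SS v) :
    (px v = 0 ∨ px v = 2 ∨ px v = 3 ∨ px v = 5) ∧
    (py v = 0 ∨ py v = 1 ∨ py v = 2 ∨ py v = 3 ∨ py v = 4 ∨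
     py v = 5 ∨ py v = 6 ∨ py v = 7) := by
  obtain ⟨hf, hlines⟩ := h
  have hgrid := frontier_grid hf
  constructor
  · by_contra hx
    push_neg at hx
    obtain ⟨hx0, hx2, hx3, hx5⟩ := hx
    have hyY : py v = 0 ∨ py v = 1 ∨ py v = 2 ∨ py v = 3 ∨ py v = 4 ∨
        py v = 5 ∨ py v = 6 ∨ py v = 7 := by
      rcases hgrid with hX | hY
      · exact absurd hX (by push_neg; exact ⟨hx0, hx2, hx3, hx5⟩)
      · exact hY
    set ε : ℝ := min (min (min (|px v - 0|) (|px v - 2|)) (min (|px v - 3|) (|px v - 5|))) 1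
      with hεdef
    have hεpos : 0 < ε := by
      apply lt_min (lt_min (lt_min _ _) (lt_min _ _)) one_pos <;>
        exact abs_pos.mpr (sub_ne_zero.mpr (by assumption))
    apply hlines ε hεpos
    refine ⟨0, 1, py v, Or.inr one_ne_zero, ?_⟩
    rintro q ⟨hqf, hqb⟩
    have hd : dist q v < ε := Metric.mem_ball.mp hqb
    have hε1 : ε ≤ 1 := min_le_right _ _
    rcases frontier_grid hqf with hqX | hqY
    · exfalso
      have hdx : |px q - px v| < ε := lt_of_le_of_lt coord_dist_x hd
      have h0 : ε ≤ |px v - 0| := le_trans (min_le_left _ _)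
        (le_trans (min_le_left _ _) (min_le_left _ _))
      have h2 : ε ≤ |px v - 2| := le_trans (min_le_left _ _)
        (le_trans (min_le_left _ _) (min_le_right _ _))
      have h3 : ε ≤ |px v - 3| := le_trans (min_le_left _ _)
        (le_trans (min_le_right _ _) (min_le_left _ _))
      have h5 : ε ≤ |px v - 5| := le_trans (min_le_left _ _)
        (le_trans (min_le_right _ _) (min_le_right _ _))
      rcases hqX with hq | hq | hq | hq <;> rw [hq] at hdx <;>
        rw [abs_sub_comm] at hdx <;> linarith
    · have hdy : |py q - py v| < 1 := lt_of_lt_of_le (lt_of_le_of_lt coord_dist_y hd) hε1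
      have := Y_close hqY hyY hdy
      linarith [this]
  · by_contra hy
    push_neg at hy
    obtain ⟨hy0, hy1, hy2, hy3, hy4, hy5, hy6, hy7⟩ := hy
    have hxX : px v = 0 ∨ px v = 2 ∨ px v = 3 ∨ px v = 5 := by
      rcases hgrid with hX | hY
      · exact hX
      · exact absurd hY (by push_neg; exact ⟨hy0, hy1, hy2, hy3, hy4, hy5, hy6, hy7⟩)
    set ε : ℝ := min (min (min (min (|py v - 0|) (|py v - 1|)) (min (|py v - 2|) (|py v - 3|)))
        (min (min (|py v - 4|) (|py v - 5|)) (min (|py v - 6|) (|py v - 7|)))) 1 with hεdef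
    have hεpos : 0 < ε := by
      apply lt_min (lt_min (lt_min (lt_min _ _) (lt_min _ _)) (lt_min (lt_min _ _) (lt_min _ _)))
        one_pos <;> exact abs_pos.mpr (sub_ne_zero.mpr (by assumption))
    apply hlines ε hεpos
    refine ⟨1, 0, px v, Or.inl one_ne_zero, ?_⟩
    rintro q ⟨hqf, hqb⟩
    have hd : dist q v < ε := Metric.mem_ball.mp hqb
    have hε1 : ε ≤ 1 := min_le_right _ _
    rcases frontier_grid hqf with hqX | hqY
    · have hdx : |px q - px v| < 1 := lt_of_lt_of_le (lt_of_le_of_lt coord_dist_x hd) hε1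
      have := X_close hqX hxX hdx
      linarith [this]
    · exfalso
      have hdy : |py q - py v| < ε := lt_of_le_of_lt coord_dist_y hd
      have h0 : ε ≤ |py v - 0| := le_trans (min_le_left _ _)
        (le_trans (min_le_left _ _) (le_trans (min_le_left _ _) (min_le_left _ _)))
      have h1 : ε ≤ |py v - 1| := le_trans (min_le_left _ _)
        (le_trans (min_le_left _ _) (le_trans (min_le_left _ _) (min_le_right _ _)))
      have h2 : ε ≤ |py v - 2| := le_trans (min_le_left _ _)
        (le_trans (min_le_left _ _) (le_trans (min_le_right _ _) (min_le_left _ _)))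
      have h3 : ε ≤ |py v - 3| := le_trans (min_le_left _ _)
        (le_trans (min_le_left _ _) (le_trans (min_le_right _ _) (min_le_right _ _)))
      have h4 : ε ≤ |py v - 4| := le_trans (min_le_left _ _)
        (le_trans (min_le_right _ _) (le_trans (min_le_left _ _) (min_le_left _ _)))
      have h5 : ε ≤ |py v - 5| := le_trans (min_le_left _ _)
        (le_trans (min_le_right _ _) (le_trans (min_le_left _ _) (min_le_right _ _)))
      have h6 : ε ≤ |py v - 6| := le_trans (min_le_left _ _)
        (le_trans (min_le_right _ _) (le_trans (min_le_right _ _) (min_le_left _ _)))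
      have h7 : ε ≤ |py v - 7| := le_trans (min_le_left _ _)
        (le_trans (min_le_right _ _) (le_trans (min_le_right _ _) (min_le_right _ _)))
      rcases hqY with hq | hq | hq | hq | hq | hq | hq | hq <;> rw [hq] at hdy <;>
        rw [abs_sub_comm] at hdy <;> linarith

/-! ### Points on the outer walls are not vertices -/

lemma SS_x_bounds {p : Plane} (h : p ∈ SS) : 0 ≤ px p ∧ px p ≤ 5 := by
  rcases mem_SS.mp h with ⟨a1,a2,a3,a4⟩ | ⟨a1,a2,a3,a4⟩ | ⟨a1,a2,a3,a4⟩ |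
    ⟨a1,a2,a3,a4⟩ | ⟨a1,a2,a3,a4⟩ <;> constructor <;> linarith

lemma not_vertex_left {c : ℝ} (h1 : 1 ≤ c) (h2 : c ≤ 6) : ¬ IsVertex SS (pt 0 c) := by
  rintro ⟨hf, hlines⟩
  apply hlines (1/2) (by norm_num)
  refine ⟨1, 0, 0, Or.inl one_ne_zero, ?_⟩
  rintro q ⟨hqf, hqb⟩
  have hd : dist q (pt 0 c) < 1/2 := Metric.mem_ball.mp hqb
  have hdx : |px q - 0| < 1/2 := by
    have := coord_dist_x (q := q) (v := pt 0 c); simp only [px_pt] at this; linarith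
  have hdy : |py q - c| < 1/2 := by
    have := coord_dist_y (q := q) (v := pt 0 c); simp only [py_pt] at this; linarith
  obtain ⟨hdx1, hdx2⟩ := abs_lt.mp hdx
  obtain ⟨hdy1, hdy2⟩ := abs_lt.mp hdy
  show 1 * px q + 0 * py q = 0
  rcases lt_trichotomy (px q) 0 with h | h | h
  · exact absurd (SS_x_bounds (frontier_SS_sub hqf)).1 (by linarith)
  · rw [h]; ring
  · exfalso
    apply frontier_not_interior hqf
    refine int_sub_interior R1_sub_SS ⟨?_, ?_, ?_, ?_⟩ <;> simp only [R1] <;> linarith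

lemma not_vertex_right {c : ℝ} (h1 : 1 ≤ c) (h2 : c ≤ 6) : ¬ IsVertex SS (pt 5 c) := by
  rintro ⟨hf, hlines⟩
  apply hlines (1/2) (by norm_num)
  refine ⟨1, 0, 5, Or.inl one_ne_zero, ?_⟩
  rintro q ⟨hqf, hqb⟩
  have hd : dist q (pt 5 c) < 1/2 := Metric.mem_ball.mp hqb
  have hdx : |px q - 5| < 1/2 := by
    have := coord_dist_x (q := q) (v := pt 5 c); simp only [px_pt] at this; linarith
  have hdy : |py q - c| < 1/2 := by
    have := coord_dist_y (q := q) (v := pt 5 c); simp only [py_pt] at this; linarith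
  obtain ⟨hdx1, hdx2⟩ := abs_lt.mp hdx
  obtain ⟨hdy1, hdy2⟩ := abs_lt.mp hdy
  show 1 * px q + 0 * py q = 5
  rcases lt_trichotomy (px q) 5 with h | h | h
  · exfalso
    apply frontier_not_interior hqf
    refine int_sub_interior R2_sub_SS ⟨?_, ?_, ?_, ?_⟩ <;> simp only [R2] <;> linarith
  · rw [h]; ring
  · exact absurd (SS_x_bounds (frontier_SS_sub hqf)).2 (by linarith)

/-! ### Witness points outside the region -/

lemma w_not_a : pt (5/2) (1/2) ∉ SS := by
  intro h
  rcases mem_SS.mp h with h | h | h | h | h <;> simp only [px_pt, py_pt] at h <;>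
    (obtain ⟨a1, a2, a3, a4⟩ := h; norm_num at *)

lemma w_not_b : pt (5/2) (5/2) ∉ SS := by
  intro h
  rcases mem_SS.mp h with h | h | h | h | h <;> simp only [px_pt, py_pt] at h <;>
    (obtain ⟨a1, a2, a3, a4⟩ := h; norm_num at *)

lemma w_not_c : pt (5/2) (9/2) ∉ SS := by
  intro h
  rcases mem_SS.mp h with h | h | h | h | h <;> simp only [px_pt, py_pt] at h <;>
    (obtain ⟨a1, a2, a3, a4⟩ := h; norm_num at *)

lemma w_not_d : pt (5/2) (13/2) ∉ SS := by
  intro h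
  rcases mem_SS.mp h with h | h | h | h | h <;> simp only [px_pt, py_pt] at h <;>
    (obtain ⟨a1, a2, a3, a4⟩ := h; norm_num at *)

/-! ### Seer lemmas: who can see the corridor witnesses -/

lemma rsee_mem {S : Set Plane} {v w r : Plane} (hsee : RSee S v w)
    (h1 : min (px v) (px w) ≤ px r) (h2 : px r ≤ max (px v) (px w))
    (h3 : min (py v) (py w) ≤ py r) (h4 : py r ≤ max (py v) (py w)) : r ∈ S :=
  hsee ⟨h1, h2, h3, h4⟩

lemma seer1 {v : Plane} (hv : IsVertex SS v) (hsee : RSee SS v (pt (5/2) (3/2))) :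
    v = pt 2 1 ∨ v = pt 2 2 ∨ v = pt 3 1 ∨ v = pt 3 2 := by
  obtain ⟨hX, hY⟩ := vertex_grid hv
  have hveq : v = pt (px v) (py v) := (pt_px_py v).symm
  rcases hX with hx | hx | hx | hx <;>
    rcases hY with hy | hy | hy | hy | hy | hy | hy | hy <;>
    first
      | (refine absurd (rsee_mem (r := pt (5/2) (1/2)) hsee ?_ ?_ ?_ ?_) w_not_a <;>
          simp only [px_pt, py_pt, hx, hy] <;> norm_num <;> done)
      | (refine absurd (rsee_mem (r := pt (5/2) (5/2)) hsee ?_ ?_ ?_ ?_) w_not_b <;>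
          simp only [px_pt, py_pt, hx, hy] <;> norm_num <;> done)
      | (rw [hx, hy] at hveq
         refine absurd (hveq ▸ hv) (not_vertex_left ?_ ?_) <;> norm_num <;> done)
      | (rw [hx, hy] at hveq
         refine absurd (hveq ▸ hv) (not_vertex_right ?_ ?_) <;> norm_num <;> done)
      | (rw [hx, hy] at hveq; exact Or.inl hveq)
      | (rw [hx, hy] at hveq; exact Or.inr (Or.inl hveq))
      | (rw [hx, hy] at hveq; exact Or.inr (Or.inr (Or.inl hveq)))
      | (rw [hx, hy] at hveq; exact Or.inr (Or.inr (Or.inr hveq)))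

lemma seer2 {v : Plane} (hv : IsVertex SS v) (hsee : RSee SS v (pt (5/2) (7/2))) :
    v = pt 2 3 ∨ v = pt 2 4 ∨ v = pt 3 3 ∨ v = pt 3 4 := by
  obtain ⟨hX, hY⟩ := vertex_grid hv
  have hveq : v = pt (px v) (py v) := (pt_px_py v).symm
  rcases hX with hx | hx | hx | hx <;>
    rcases hY with hy | hy | hy | hy | hy | hy | hy | hy <;>
    first
      | (refine absurd (rsee_mem (r := pt (5/2) (5/2)) hsee ?_ ?_ ?_ ?_) w_not_b <;>
          simp only [px_pt, py_pt, hx, hy] <;> norm_num <;> done)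
      | (refine absurd (rsee_mem (r := pt (5/2) (9/2)) hsee ?_ ?_ ?_ ?_) w_not_c <;>
          simp only [px_pt, py_pt, hx, hy] <;> norm_num <;> done)
      | (rw [hx, hy] at hveq
         refine absurd (hveq ▸ hv) (not_vertex_left ?_ ?_) <;> norm_num <;> done)
      | (rw [hx, hy] at hveq
         refine absurd (hveq ▸ hv) (not_vertex_right ?_ ?_) <;> norm_num <;> done)
      | (rw [hx, hy] at hveq; exact Or.inl hveq)
      | (rw [hx, hy] at hveq; exact Or.inr (Or.inl hveq))
      | (rw [hx, hy] at hveq; exact Or.inr (Or.inr (Or.inl hveq)))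
      | (rw [hx, hy] at hveq; exact Or.inr (Or.inr (Or.inr hveq)))

lemma seer3 {v : Plane} (hv : IsVertex SS v) (hsee : RSee SS v (pt (5/2) (11/2))) :
    v = pt 2 5 ∨ v = pt 2 6 ∨ v = pt 3 5 ∨ v = pt 3 6 := by
  obtain ⟨hX, hY⟩ := vertex_grid hv
  have hveq : v = pt (px v) (py v) := (pt_px_py v).symm
  rcases hX with hx | hx | hx | hx <;>
    rcases hY with hy | hy | hy | hy | hy | hy | hy | hy <;>
    first
      | (refine absurd (rsee_mem (r := pt (5/2) (9/2)) hsee ?_ ?_ ?_ ?_) w_not_c <;>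
          simp only [px_pt, py_pt, hx, hy] <;> norm_num <;> done)
      | (refine absurd (rsee_mem (r := pt (5/2) (13/2)) hsee ?_ ?_ ?_ ?_) w_not_d <;>
          simp only [px_pt, py_pt, hx, hy] <;> norm_num <;> done)
      | (rw [hx, hy] at hveq
         refine absurd (hveq ▸ hv) (not_vertex_left ?_ ?_) <;> norm_num <;> done)
      | (rw [hx, hy] at hveq
         refine absurd (hveq ▸ hv) (not_vertex_right ?_ ?_) <;> norm_num <;> done)
      | (rw [hx, hy] at hveq; exact Or.inl hveq)
      | (rw [hx, hy] at hveq; exact Or.inr (Or.inl hveq))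
      | (rw [hx, hy] at hveq; exact Or.inr (Or.inr (Or.inl hveq)))
      | (rw [hx, hy] at hveq; exact Or.inr (Or.inr (Or.inr hveq)))

/-! ### Membership helpers and geodesic pair bounds -/

lemma pt_x2_mem {y : ℝ} (h1 : 0 ≤ y) (h2 : y ≤ 7) : pt 2 y ∈ SS :=
  mem_SS.mpr (Or.inl ⟨by norm_num, by norm_num, by simpa using h1, by simpa using h2⟩)

lemma pt_x3_mem {y : ℝ} (h1 : 0 ≤ y) (h2 : y ≤ 7) : pt 3 y ∈ SS :=
  mem_SS.mpr (Or.inr (Or.inl ⟨by norm_num, by norm_num, by simpa using h1, by simpa using h2⟩))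

lemma pt_y3_mem {x : ℝ} (h1 : 2 ≤ x) (h2 : x ≤ 3) : pt x 3 ∈ SS :=
  mem_SS.mpr (Or.inr (Or.inr (Or.inr (Or.inl
    ⟨by simpa using h1, by simpa using h2, by norm_num, by norm_num⟩))))

lemma pt_y4_mem {x : ℝ} (h1 : 2 ≤ x) (h2 : x ≤ 3) : pt x 4 ∈ SS :=
  mem_SS.mpr (Or.inr (Or.inr (Or.inr (Or.inl
    ⟨by simpa using h1, by simpa using h2, by norm_num, by norm_num⟩))))

lemma pt_y5_mem {x : ℝ} (h1 : 2 ≤ x) (h2 : x ≤ 3) : pt x 5 ∈ SS :=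
  mem_SS.mpr (Or.inr (Or.inr (Or.inr (Or.inr
    ⟨by simpa using h1, by simpa using h2, by norm_num, by norm_num⟩))))

lemma pt_y6_mem {x : ℝ} (h1 : 2 ≤ x) (h2 : x ≤ 3) : pt x 6 ∈ SS :=
  mem_SS.mpr (Or.inr (Or.inr (Or.inr (Or.inr
    ⟨by simpa using h1, by simpa using h2, by norm_num, by norm_num⟩))))

lemma ofReal_le_three {x : ℝ} (h : x ≤ 3) : ENNReal.ofReal x ≤ 3 :=
  le_trans (ENNReal.ofReal_le_ofReal h) (by norm_num)


lemma pair_21_23 : geodesic SS (pt 2 1) (pt 2 3) ≤ 3 := by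
  refine le_trans (geodesic_le_vh SS 2 1 2 3 ?_ ?_) (ofReal_le_three (by norm_num))
  · intro y h1 h2
    norm_num at h1 h2
    exact pt_x2_mem (by linarith) (by linarith)
  · intro x h1 h2
    norm_num at h1 h2
    exact pt_y3_mem (by linarith) (by linarith)

lemma pair_21_24 : geodesic SS (pt 2 1) (pt 2 4) ≤ 3 := by
  refine le_trans (geodesic_le_vh SS 2 1 2 4 ?_ ?_) (ofReal_le_three (by norm_num))
  · intro y h1 h2
    norm_num at h1 h2
    exact pt_x2_mem (by linarith) (by linarith)
  · intro x h1 h2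
    norm_num at h1 h2
    exact pt_y4_mem (by linarith) (by linarith)

lemma pair_22_23 : geodesic SS (pt 2 2) (pt 2 3) ≤ 3 := by
  refine le_trans (geodesic_le_vh SS 2 2 2 3 ?_ ?_) (ofReal_le_three (by norm_num))
  · intro y h1 h2
    norm_num at h1 h2
    exact pt_x2_mem (by linarith) (by linarith)
  · intro x h1 h2
    norm_num at h1 h2
    exact pt_y3_mem (by linarith) (by linarith)

lemma pair_22_24 : geodesic SS (pt 2 2) (pt 2 4) ≤ 3 := by
  refine le_trans (geodesic_le_vh SS 2 2 2 4 ?_ ?_) (ofReal_le_three (by norm_num))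
  · intro y h1 h2
    norm_num at h1 h2
    exact pt_x2_mem (by linarith) (by linarith)
  · intro x h1 h2
    norm_num at h1 h2
    exact pt_y4_mem (by linarith) (by linarith)

lemma pair_31_33 : geodesic SS (pt 3 1) (pt 3 3) ≤ 3 := by
  refine le_trans (geodesic_le_vh SS 3 1 3 3 ?_ ?_) (ofReal_le_three (by norm_num))
  · intro y h1 h2
    norm_num at h1 h2
    exact pt_x3_mem (by linarith) (by linarith)
  · intro x h1 h2
    norm_num at h1 h2
    exact pt_y3_mem (by linarith) (by linarith)

lemma pair_31_34 : geodesic SS (pt 3 1) (pt 3 4) ≤ 3 := by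
  refine le_trans (geodesic_le_vh SS 3 1 3 4 ?_ ?_) (ofReal_le_three (by norm_num))
  · intro y h1 h2
    norm_num at h1 h2
    exact pt_x3_mem (by linarith) (by linarith)
  · intro x h1 h2
    norm_num at h1 h2
    exact pt_y4_mem (by linarith) (by linarith)

lemma pair_32_33 : geodesic SS (pt 3 2) (pt 3 3) ≤ 3 := by
  refine le_trans (geodesic_le_vh SS 3 2 3 3 ?_ ?_) (ofReal_le_three (by norm_num))
  · intro y h1 h2
    norm_num at h1 h2
    exact pt_x3_mem (by linarith) (by linarith)
  · intro x h1 h2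
    norm_num at h1 h2
    exact pt_y3_mem (by linarith) (by linarith)

lemma pair_32_34 : geodesic SS (pt 3 2) (pt 3 4) ≤ 3 := by
  refine le_trans (geodesic_le_vh SS 3 2 3 4 ?_ ?_) (ofReal_le_three (by norm_num))
  · intro y h1 h2
    norm_num at h1 h2
    exact pt_x3_mem (by linarith) (by linarith)
  · intro x h1 h2
    norm_num at h1 h2
    exact pt_y4_mem (by linarith) (by linarith)

lemma pair_21_33 : geodesic SS (pt 2 1) (pt 3 3) ≤ 3 := by
  refine le_trans (geodesic_le_vh SS 2 1 3 3 ?_ ?_) (ofReal_le_three (by norm_num))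
  · intro y h1 h2
    norm_num at h1 h2
    exact pt_x2_mem (by linarith) (by linarith)
  · intro x h1 h2
    norm_num at h1 h2
    exact pt_y3_mem (by linarith) (by linarith)

lemma pair_22_33 : geodesic SS (pt 2 2) (pt 3 3) ≤ 3 := by
  refine le_trans (geodesic_le_vh SS 2 2 3 3 ?_ ?_) (ofReal_le_three (by norm_num))
  · intro y h1 h2
    norm_num at h1 h2
    exact pt_x2_mem (by linarith) (by linarith)
  · intro x h1 h2
    norm_num at h1 h2
    exact pt_y3_mem (by linarith) (by linarith)

lemma pair_22_34 : geodesic SS (pt 2 2) (pt 3 4) ≤ 3 := by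
  refine le_trans (geodesic_le_vh SS 2 2 3 4 ?_ ?_) (ofReal_le_three (by norm_num))
  · intro y h1 h2
    norm_num at h1 h2
    exact pt_x2_mem (by linarith) (by linarith)
  · intro x h1 h2
    norm_num at h1 h2
    exact pt_y4_mem (by linarith) (by linarith)

lemma pair_31_23 : geodesic SS (pt 3 1) (pt 2 3) ≤ 3 := by
  refine le_trans (geodesic_le_vh SS 3 1 2 3 ?_ ?_) (ofReal_le_three (by norm_num))
  · intro y h1 h2
    norm_num at h1 h2
    exact pt_x3_mem (by linarith) (by linarith)
  · intro x h1 h2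
    norm_num at h1 h2
    exact pt_y3_mem (by linarith) (by linarith)

lemma pair_32_23 : geodesic SS (pt 3 2) (pt 2 3) ≤ 3 := by
  refine le_trans (geodesic_le_vh SS 3 2 2 3 ?_ ?_) (ofReal_le_three (by norm_num))
  · intro y h1 h2
    norm_num at h1 h2
    exact pt_x3_mem (by linarith) (by linarith)
  · intro x h1 h2
    norm_num at h1 h2
    exact pt_y3_mem (by linarith) (by linarith)

lemma pair_32_24 : geodesic SS (pt 3 2) (pt 2 4) ≤ 3 := by
  refine le_trans (geodesic_le_vh SS 3 2 2 4 ?_ ?_) (ofReal_le_three (by norm_num))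
  · intro y h1 h2
    norm_num at h1 h2
    exact pt_x3_mem (by linarith) (by linarith)
  · intro x h1 h2
    norm_num at h1 h2
    exact pt_y4_mem (by linarith) (by linarith)

lemma pair_34_25 : geodesic SS (pt 3 4) (pt 2 5) ≤ 3 := by
  refine le_trans (geodesic_le_vh SS 3 4 2 5 ?_ ?_) (ofReal_le_three (by norm_num))
  · intro y h1 h2
    norm_num at h1 h2
    exact pt_x3_mem (by linarith) (by linarith)
  · intro x h1 h2
    norm_num at h1 h2
    exact pt_y5_mem (by linarith) (by linarith)

lemma pair_34_26 : geodesic SS (pt 3 4) (pt 2 6) ≤ 3 := by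
  refine le_trans (geodesic_le_vh SS 3 4 2 6 ?_ ?_) (ofReal_le_three (by norm_num))
  · intro y h1 h2
    norm_num at h1 h2
    exact pt_x3_mem (by linarith) (by linarith)
  · intro x h1 h2
    norm_num at h1 h2
    exact pt_y6_mem (by linarith) (by linarith)

lemma pair_34_35 : geodesic SS (pt 3 4) (pt 3 5) ≤ 3 := by
  refine le_trans (geodesic_le_vh SS 3 4 3 5 ?_ ?_) (ofReal_le_three (by norm_num))
  · intro y h1 h2
    norm_num at h1 h2
    exact pt_x3_mem (by linarith) (by linarith)
  · intro x h1 h2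
    norm_num at h1 h2
    exact pt_y5_mem (by linarith) (by linarith)

lemma pair_34_36 : geodesic SS (pt 3 4) (pt 3 6) ≤ 3 := by
  refine le_trans (geodesic_le_vh SS 3 4 3 6 ?_ ?_) (ofReal_le_three (by norm_num))
  · intro y h1 h2
    norm_num at h1 h2
    exact pt_x3_mem (by linarith) (by linarith)
  · intro x h1 h2
    norm_num at h1 h2
    exact pt_y6_mem (by linarith) (by linarith)

lemma pair_24_25 : geodesic SS (pt 2 4) (pt 2 5) ≤ 3 := by
  refine le_trans (geodesic_le_vh SS 2 4 2 5 ?_ ?_) (ofReal_le_three (by norm_num))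
  · intro y h1 h2
    norm_num at h1 h2
    exact pt_x2_mem (by linarith) (by linarith)
  · intro x h1 h2
    norm_num at h1 h2
    exact pt_y5_mem (by linarith) (by linarith)

lemma pair_24_26 : geodesic SS (pt 2 4) (pt 2 6) ≤ 3 := by
  refine le_trans (geodesic_le_vh SS 2 4 2 6 ?_ ?_) (ofReal_le_three (by norm_num))
  · intro y h1 h2
    norm_num at h1 h2
    exact pt_x2_mem (by linarith) (by linarith)
  · intro x h1 h2
    norm_num at h1 h2
    exact pt_y6_mem (by linarith) (by linarith)

lemma pair_24_35 : geodesic SS (pt 2 4) (pt 3 5) ≤ 3 := by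
  refine le_trans (geodesic_le_vh SS 2 4 3 5 ?_ ?_) (ofReal_le_three (by norm_num))
  · intro y h1 h2
    norm_num at h1 h2
    exact pt_x2_mem (by linarith) (by linarith)
  · intro x h1 h2
    norm_num at h1 h2
    exact pt_y5_mem (by linarith) (by linarith)

lemma pair_24_36 : geodesic SS (pt 2 4) (pt 3 6) ≤ 3 := by
  refine le_trans (geodesic_le_vh SS 2 4 3 6 ?_ ?_) (ofReal_le_three (by norm_num))
  · intro y h1 h2
    norm_num at h1 h2
    exact pt_x2_mem (by linarith) (by linarith)
  · intro x h1 h2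
    norm_num at h1 h2
    exact pt_y6_mem (by linarith) (by linarith)

lemma pt_ne {a b a' b' : ℝ} (h : b ≠ b') : pt a b ≠ pt a' b' := fun he => h (pt_inj he).2

lemma main_SS (G : Finset Plane) (hvert : ∀ g ∈ G, IsVertex SS g)
    (hcov : ∀ p ∈ SS, ∃ g ∈ G, RSee SS g p) :
    ∃ g ∈ G, ∃ g' ∈ G, g ≠ g' ∧ geodesic SS g g' ≤ 3 := by
  have hw1 : pt (5/2) (3/2) ∈ SS := by
    rw [mem_SS]; simp only [px_pt, py_pt]; norm_num
  have hw2 : pt (5/2) (7/2) ∈ SS := by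
    rw [mem_SS]; simp only [px_pt, py_pt]; norm_num
  have hw3 : pt (5/2) (11/2) ∈ SS := by
    rw [mem_SS]; simp only [px_pt, py_pt]; norm_num
  obtain ⟨g1, hg1G, hs1⟩ := hcov _ hw1
  obtain ⟨g2, hg2G, hs2⟩ := hcov _ hw2
  obtain ⟨g3, hg3G, hs3⟩ := hcov _ hw3
  have h1 := seer1 (hvert g1 hg1G) hs1
  have h2 := seer2 (hvert g2 hg2G) hs2
  have h3 := seer3 (hvert g3 hg3G) hs3
  rcases h1 with e1 | e1 | e1 | e1
  · -- g1 = pt 2 1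
    rcases h2 with e2 | e2 | e2 | e2
    · exact ⟨g1, hg1G, g2, hg2G, by rw [e1, e2]; exact pt_ne (by norm_num),
        by rw [e1, e2]; exact pair_21_23⟩
    · exact ⟨g1, hg1G, g2, hg2G, by rw [e1, e2]; exact pt_ne (by norm_num),
        by rw [e1, e2]; exact pair_21_24⟩
    · exact ⟨g1, hg1G, g2, hg2G, by rw [e1, e2]; exact pt_ne (by norm_num),
        by rw [e1, e2]; exact pair_21_33⟩
    · rcases h3 with e3 | e3 | e3 | e3
      · exact ⟨g2, hg2G, g3, hg3G, by rw [e2, e3]; exact pt_ne (by norm_num),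
          by rw [e2, e3]; exact pair_34_25⟩
      · exact ⟨g2, hg2G, g3, hg3G, by rw [e2, e3]; exact pt_ne (by norm_num),
          by rw [e2, e3]; exact pair_34_26⟩
      · exact ⟨g2, hg2G, g3, hg3G, by rw [e2, e3]; exact pt_ne (by norm_num),
          by rw [e2, e3]; exact pair_34_35⟩
      · exact ⟨g2, hg2G, g3, hg3G, by rw [e2, e3]; exact pt_ne (by norm_num),
          by rw [e2, e3]; exact pair_34_36⟩
  · -- g1 = pt 2 2
    rcases h2 with e2 | e2 | e2 | e2
    · exact ⟨g1, hg1G, g2, hg2G, by rw [e1, e2]; exact pt_ne (by norm_num),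
        by rw [e1, e2]; exact pair_22_23⟩
    · exact ⟨g1, hg1G, g2, hg2G, by rw [e1, e2]; exact pt_ne (by norm_num),
        by rw [e1, e2]; exact pair_22_24⟩
    · exact ⟨g1, hg1G, g2, hg2G, by rw [e1, e2]; exact pt_ne (by norm_num),
        by rw [e1, e2]; exact pair_22_33⟩
    · exact ⟨g1, hg1G, g2, hg2G, by rw [e1, e2]; exact pt_ne (by norm_num),
        by rw [e1, e2]; exact pair_22_34⟩
  · -- g1 = pt 3 1
    rcases h2 with e2 | e2 | e2 | e2
    · exact ⟨g1, hg1G, g2, hg2G, by rw [e1, e2]; exact pt_ne (by norm_num),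
        by rw [e1, e2]; exact pair_31_23⟩
    · rcases h3 with e3 | e3 | e3 | e3
      · exact ⟨g2, hg2G, g3, hg3G, by rw [e2, e3]; exact pt_ne (by norm_num),
          by rw [e2, e3]; exact pair_24_25⟩
      · exact ⟨g2, hg2G, g3, hg3G, by rw [e2, e3]; exact pt_ne (by norm_num),
          by rw [e2, e3]; exact pair_24_26⟩
      · exact ⟨g2, hg2G, g3, hg3G, by rw [e2, e3]; exact pt_ne (by norm_num),
          by rw [e2, e3]; exact pair_24_35⟩
      · exact ⟨g2, hg2G, g3, hg3G, by rw [e2, e3]; exact pt_ne (by norm_num),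
          by rw [e2, e3]; exact pair_24_36⟩
    · exact ⟨g1, hg1G, g2, hg2G, by rw [e1, e2]; exact pt_ne (by norm_num),
        by rw [e1, e2]; exact pair_31_33⟩
    · exact ⟨g1, hg1G, g2, hg2G, by rw [e1, e2]; exact pt_ne (by norm_num),
        by rw [e1, e2]; exact pair_31_34⟩
  · -- g1 = pt 3 2
    rcases h2 with e2 | e2 | e2 | e2
    · exact ⟨g1, hg1G, g2, hg2G, by rw [e1, e2]; exact pt_ne (by norm_num),
        by rw [e1, e2]; exact pair_32_23⟩
    · exact ⟨g1, hg1G, g2, hg2G, by rw [e1, e2]; exact pt_ne (by norm_num),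
        by rw [e1, e2]; exact pair_32_24⟩
    · exact ⟨g1, hg1G, g2, hg2G, by rw [e1, e2]; exact pt_ne (by norm_num),
        by rw [e1, e2]; exact pair_32_33⟩
    · exact ⟨g1, hg1G, g2, hg2G, by rw [e1, e2]; exact pt_ne (by norm_num),
        by rw [e1, e2]; exact pair_32_34⟩

/-- There exists an office-like polygon all of whose vertices have
integer coordinates such that every vertex guard set of it has dispersion distance at
most `3`, i.e. contains two distinct guards at geodesic `L¹`-distance at most `3`. -/
theorem exists_integer_office_polygon_dispersion_le_three :
    ∃ P : OfficePolygon, HasIntegerVertices P.region ∧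
      ∀ G : Finset Plane, IsGuardSet P.region G →
        ∃ g ∈ G, ∃ g' ∈ G, g ≠ g' ∧ geodesic P.region g g' ≤ 3 := by
  refine ⟨P, ?_, ?_⟩
  · intro v hv
    rw [P_region] at hv
    obtain ⟨hX, hY⟩ := vertex_grid hv
    obtain ⟨a, ha⟩ : ∃ a : ℤ, px v = (a : ℝ) := by
      rcases hX with h | h | h | h
      exacts [⟨0, by rw [h]; norm_num⟩, ⟨2, by rw [h]; norm_num⟩,
        ⟨3, by rw [h]; norm_num⟩, ⟨5, by rw [h]; norm_num⟩]
    obtain ⟨b, hb⟩ : ∃ b : ℤ, py v = (b : ℝ) := by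
      rcases hY with h | h | h | h | h | h | h | h
      exacts [⟨0, by rw [h]; norm_num⟩, ⟨1, by rw [h]; norm_num⟩,
        ⟨2, by rw [h]; norm_num⟩, ⟨3, by rw [h]; norm_num⟩,
        ⟨4, by rw [h]; norm_num⟩, ⟨5, by rw [h]; norm_num⟩,
        ⟨6, by rw [h]; norm_num⟩, ⟨7, by rw [h]; norm_num⟩]
    exact ⟨a, b, by rw [← ha, ← hb]; exact (pt_px_py v).symm⟩
  · intro G hG
    rw [P_region] at hG
    rw [show P.region = SS from P_region]
    exact main_SS G hG.1 hG.2

end DispersiveAGP
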